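/- Let a ≤ b be real numbers and let {f_i}_{i≥0} be an i.i.d. sequence of random functions from [a, b] to [a, b] (random elements of the space of functions [a, b] → [a, b] equipped with the σ-algebra generated by the evaluation maps), each of which is almost surely nondecreasing. Let F_n(x) = (f_0 ∘ f_1 ∘ ⋯ ∘ f_n)(x). If P(f_0(a) ≥ f_1(b)) > 0, then almost surely F_n converges uniformly on [a, b] to a constant function: almost surely there exists L ∈ [a, b] with sup_{x ∈ [a,b]} |F_n(x) − L| → 0 as n → ∞. -/

import Mathlib

open MeasureTheory ProbabilityTheory Filter Set

/-- `compIter f n = f 0 ∘ f 1 ∘ ⋯ ∘ f n`. -/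
def compIter {α : Type*} (f : ℕ → α → α) : ℕ → α → α
  | 0 => f 0
  | n + 1 => compIter f n ∘ f (n + 1)

namespace S9

open scoped ENNReal NNReal

noncomputable section

/-! ### Clamp -/

def cl (a b v : ℝ) : ℝ := max a (min v b)

lemma le_cl {a b v : ℝ} : a ≤ cl a b v := le_max_left _ _

lemma cl_le {a b v : ℝ} (hab : a ≤ b) : cl a b v ≤ b :=
  max_le hab (min_le_right _ _)

lemma cl_eq {a b v : ℝ} (h1 : a ≤ v) (h2 : v ≤ b) : cl a b v = v := by
  rw [cl, min_eq_left h2, max_eq_right h1]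

lemma cl_mono {a b v w : ℝ} (h : v ≤ w) : cl a b v ≤ cl a b w :=
  max_le_max le_rfl (min_le_min h le_rfl)

/-! ### Grid regularizations -/

def upF (a b : ℝ) (e : ℕ → ℝ) (y : ℕ → ℝ) (z : ℝ) : ℝ :=
  ⨅ n, if z ≤ e n then cl a b (y n) else b

def dnF (a b : ℝ) (e : ℕ → ℝ) (y : ℕ → ℝ) (z : ℝ) : ℝ :=
  ⨆ n, if e n ≤ z then cl a b (y n) else a

/-- grid-monotonicity of a value family. -/
def gridMono (a b : ℝ) (e : ℕ → ℝ) (y : ℕ → ℝ) : Prop :=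
  ∀ m n, e m ≤ e n → cl a b (y m) ≤ cl a b (y n)

variable {a b : ℝ} {e y : ℕ → ℝ} {z z' : ℝ}

lemma upF_bddBelow (hab : a ≤ b) :
    BddBelow (Set.range fun n => if z ≤ e n then cl a b (y n) else b) := by
  refine ⟨a, ?_⟩
  rintro _ ⟨n, rfl⟩
  dsimp only
  split
  · exact le_cl
  · exact hab

lemma dnF_bddAbove (hab : a ≤ b) :
    BddAbove (Set.range fun n => if e n ≤ z then cl a b (y n) else a) := by
  refine ⟨b, ?_⟩
  rintro _ ⟨n, rfl⟩
  dsimp only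
  split
  · exact cl_le hab
  · exact hab

lemma le_upF (hab : a ≤ b) : a ≤ upF a b e y z := by
  refine le_ciInf fun n => ?_
  split
  · exact le_cl
  · exact hab

lemma dnF_le (hab : a ≤ b) : dnF a b e y z ≤ b := by
  refine ciSup_le fun n => ?_
  split
  · exact cl_le hab
  · exact hab

lemma upF_le_cl (hab : a ≤ b) {n : ℕ} (h : z ≤ e n) : upF a b e y z ≤ cl a b (y n) := by
  refine ciInf_le_of_le (upF_bddBelow hab) n ?_
  simp [h]

lemma cl_le_dnF (hab : a ≤ b) {n : ℕ} (h : e n ≤ z) : cl a b (y n) ≤ dnF a b e y z := by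
  refine le_ciSup_of_le (dnF_bddAbove hab) n ?_
  simp [h]

lemma upF_le_b (hab : a ≤ b) : upF a b e y z ≤ b := by
  refine ciInf_le_of_le (upF_bddBelow hab) 0 ?_
  split
  · exact cl_le hab
  · exact le_rfl

lemma a_le_dnF (hab : a ≤ b) : a ≤ dnF a b e y z := by
  refine le_ciSup_of_le (dnF_bddAbove hab) 0 ?_
  split
  · exact le_cl
  · exact le_rfl

lemma upF_mono (hab : a ≤ b) (hz : z ≤ z') : upF a b e y z ≤ upF a b e y z' := by
  refine le_ciInf fun n => ?_
  by_cases h : z' ≤ e n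
  · calc upF a b e y z ≤ cl a b (y n) := upF_le_cl hab (hz.trans h)
    _ = if z' ≤ e n then cl a b (y n) else b := by simp [h]
  · simpa [h] using upF_le_b (y := y) (e := e) (z := z) hab

lemma dnF_mono (hab : a ≤ b) (hz : z ≤ z') : dnF a b e y z ≤ dnF a b e y z' := by
  refine ciSup_le fun n => ?_
  by_cases h : e n ≤ z
  · calc (if e n ≤ z then cl a b (y n) else a) = cl a b (y n) := by simp [h]
    _ ≤ dnF a b e y z' := cl_le_dnF hab (h.trans hz)
  · simpa [h] using a_le_dnF (y := y) (e := e) (z := z') hab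

lemma cl_le_upF (hab : a ≤ b) (hg : gridMono a b e y) {n : ℕ} (h : e n ≤ z) :
    cl a b (y n) ≤ upF a b e y z := by
  refine le_ciInf fun m => ?_
  by_cases hm : z ≤ e m
  · simpa [hm] using hg n m (h.trans hm)
  · simpa [hm] using cl_le hab (v := y n)

lemma dnF_le_cl (hab : a ≤ b) (hg : gridMono a b e y) {n : ℕ} (h : z ≤ e n) :
    dnF a b e y z ≤ cl a b (y n) := by
  refine ciSup_le fun m => ?_
  by_cases hm : e m ≤ z
  · simpa [hm] using hg m n (hm.trans h)
  · simpa [hm] using le_cl (a := a) (b := b) (v := y n)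

lemma upF_grid_eq (hab : a ≤ b) (hg : gridMono a b e y) {n : ℕ} (h : e n = z) :
    upF a b e y z = cl a b (y n) :=
  le_antisymm (upF_le_cl hab h.ge) (cl_le_upF hab hg h.le)

lemma dnF_grid_eq (hab : a ≤ b) (hg : gridMono a b e y) {n : ℕ} (h : e n = z) :
    dnF a b e y z = cl a b (y n) :=
  le_antisymm (dnF_le_cl hab hg h.ge) (cl_le_dnF hab h.le)

lemma dnF_le_upF (hab : a ≤ b) (hg : gridMono a b e y) : dnF a b e y z ≤ upF a b e y z := by
  refine ciSup_le fun m => ?_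
  by_cases hm : e m ≤ z
  · refine le_ciInf fun n => ?_
    by_cases hn : z ≤ e n
    · simpa [hm, hn] using hg m n (hm.trans hn)
    · simpa [hm, hn] using cl_le hab (v := y m)
  · simpa [hm] using le_upF (y := y) (e := e) (z := z) hab

/-- comparison with a coarser grid given by an injection `ι` of indices. -/
lemma upF_le_subgrid (e' : ℕ → ℝ) (ι : ℕ → ℕ) (hι : ∀ k, e (ι k) = e' k) (hab : a ≤ b) :
    upF a b e y z ≤ upF a b e' (fun k => y (ι k)) z := by
  refine le_ciInf fun k => ?_
  by_cases h : z ≤ e' k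
  · calc upF a b e y z ≤ cl a b (y (ι k)) := upF_le_cl hab (by rw [hι]; exact h)
    _ = _ := by simp [h]
  · simpa [h] using upF_le_b (y := y) (e := e) (z := z) hab

lemma subgrid_le_dnF (e' : ℕ → ℝ) (ι : ℕ → ℕ) (hι : ∀ k, e (ι k) = e' k) (hab : a ≤ b) :
    dnF a b e' (fun k => y (ι k)) z ≤ dnF a b e y z := by
  refine ciSup_le fun k => ?_
  by_cases h : e' k ≤ z
  · calc (if e' k ≤ z then cl a b (y (ι k)) else a) = cl a b (y (ι k)) := by simp [h]
    _ ≤ dnF a b e y z := cl_le_dnF hab (by rw [hι]; exact h)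
  · simpa [h] using a_le_dnF (y := y) (e := e) (z := z) hab

/-! ### Chains -/

def upC (a b : ℝ) (e : ℕ → ℝ) (Y : ℕ → ℕ → ℝ) : ℕ → ℝ → ℝ
  | 0, z => upF a b e (Y 0) z
  | n + 1, z => upC a b e Y n (upF a b e (Y (n + 1)) z)

def dnC (a b : ℝ) (e : ℕ → ℝ) (Y : ℕ → ℕ → ℝ) : ℕ → ℝ → ℝ
  | 0, z => dnF a b e (Y 0) z
  | n + 1, z => dnC a b e Y n (dnF a b e (Y (n + 1)) z)

variable {Y : ℕ → ℕ → ℝ}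

lemma upC_mono (hab : a ≤ b) : ∀ n, ∀ {z z' : ℝ}, z ≤ z' → upC a b e Y n z ≤ upC a b e Y n z'
  | 0, _, _, h => upF_mono hab h
  | n + 1, _, _, h => upC_mono hab n (upF_mono hab h)

lemma dnC_mono (hab : a ≤ b) : ∀ n, ∀ {z z' : ℝ}, z ≤ z' → dnC a b e Y n z ≤ dnC a b e Y n z'
  | 0, _, _, h => dnF_mono hab h
  | n + 1, _, _, h => dnC_mono hab n (dnF_mono hab h)

lemma le_upC (hab : a ≤ b) : ∀ n, ∀ {z : ℝ}, a ≤ upC a b e Y n z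
  | 0, _ => le_upF hab
  | n + 1, _ => le_upC hab n

lemma upC_le (hab : a ≤ b) : ∀ n, ∀ {z : ℝ}, upC a b e Y n z ≤ b
  | 0, _ => upF_le_b hab
  | n + 1, _ => upC_le hab n

lemma le_dnC (hab : a ≤ b) : ∀ n, ∀ {z : ℝ}, a ≤ dnC a b e Y n z
  | 0, _ => a_le_dnF hab
  | n + 1, _ => le_dnC hab n

lemma dnC_le (hab : a ≤ b) : ∀ n, ∀ {z : ℝ}, dnC a b e Y n z ≤ b
  | 0, _ => dnF_le hab
  | n + 1, _ => dnC_le hab n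


/-! ### Sandwich with a true monotone family -/

section Sandwich

variable {a b : ℝ} {e : ℕ → ℝ} {pe : ℕ → Set.Icc a b} {φ : ℕ → Set.Icc a b → Set.Icc a b}
  {Y : ℕ → ℕ → ℝ}

lemma apply_le_upF (hpe : ∀ n, (pe n : ℝ) = e n) (hφ : ∀ j, Monotone (φ j))
    (hy : ∀ j m, Y j m = (φ j (pe m) : ℝ)) (j : ℕ) (x : Set.Icc a b) {z : ℝ}
    (hxz : (x : ℝ) ≤ z) : (φ j x : ℝ) ≤ upF a b e (Y j) z := by
  refine le_ciInf fun n => ?_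
  by_cases h : z ≤ e n
  · have hx : x ≤ pe n := Subtype.coe_le_coe.mp (by rw [hpe]; exact hxz.trans h)
    simp only [if_pos h, hy]
    rw [cl_eq (φ j (pe n)).2.1 (φ j (pe n)).2.2]
    exact Subtype.coe_le_coe.mpr (hφ j hx)
  · simpa [h] using (φ j x).2.2

lemma dnF_le_apply (hpe : ∀ n, (pe n : ℝ) = e n) (hφ : ∀ j, Monotone (φ j))
    (hy : ∀ j m, Y j m = (φ j (pe m) : ℝ)) (j : ℕ) (x : Set.Icc a b) {z : ℝ}
    (hxz : z ≤ (x : ℝ)) : dnF a b e (Y j) z ≤ (φ j x : ℝ) := by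
  refine ciSup_le fun n => ?_
  by_cases h : e n ≤ z
  · have hx : pe n ≤ x := Subtype.coe_le_coe.mp (by rw [hpe]; exact h.trans hxz)
    simp only [if_pos h, hy]
    rw [cl_eq (φ j (pe n)).2.1 (φ j (pe n)).2.2]
    exact Subtype.coe_le_coe.mpr (hφ j hx)
  · simpa [h] using (φ j x).2.1

lemma compIter_le_upC (hpe : ∀ n, (pe n : ℝ) = e n) (hφ : ∀ j, Monotone (φ j))
    (hy : ∀ j m, Y j m = (φ j (pe m) : ℝ)) :
    ∀ n (x : Set.Icc a b) (z : ℝ), (x : ℝ) ≤ z →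
      ((compIter φ n x : Set.Icc a b) : ℝ) ≤ upC a b e Y n z := by
  intro n
  induction n with
  | zero => exact fun x z hxz => apply_le_upF hpe hφ hy 0 x hxz
  | succ n ih =>
      intro x z hxz
      exact ih (φ (n + 1) x) _ (apply_le_upF hpe hφ hy (n + 1) x hxz)

lemma dnC_le_compIter (hpe : ∀ n, (pe n : ℝ) = e n) (hφ : ∀ j, Monotone (φ j))
    (hy : ∀ j m, Y j m = (φ j (pe m) : ℝ)) :
    ∀ n (x : Set.Icc a b) (z : ℝ), z ≤ (x : ℝ) →
      dnC a b e Y n z ≤ ((compIter φ n x : Set.Icc a b) : ℝ) := by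
  intro n
  induction n with
  | zero => exact fun x z hxz => dnF_le_apply hpe hφ hy 0 x hxz
  | succ n ih =>
      intro x z hxz
      exact ih (φ (n + 1) x) _ (dnF_le_apply hpe hφ hy (n + 1) x hxz)

end Sandwich

/-! ### Measurability -/

section Meas

variable {a b : ℝ} {e : ℕ → ℝ}

lemma measurable_upF_comp {Ω : Type*} {m' : MeasurableSpace Ω} {Y : Ω → ℕ → ℝ} {Z : Ω → ℝ}
    (hab : a ≤ b) (hY : Measurable[m'] Y) (hZ : Measurable[m'] Z) :
    Measurable[m'] fun ω => upF a b e (Y ω) (Z ω) := by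
  refine Measurable.isGLB (f := fun n ω => if Z ω ≤ e n then cl a b (Y ω n) else b)
    (fun n => Measurable.ite (measurableSet_le hZ measurable_const)
      (measurable_const.max (((measurable_pi_apply n).comp hY).min measurable_const))
      measurable_const) (fun ω => ?_)
  exact isGLB_ciInf (upF_bddBelow hab)

lemma measurable_dnF_comp {Ω : Type*} {m' : MeasurableSpace Ω} {Y : Ω → ℕ → ℝ} {Z : Ω → ℝ}
    (hab : a ≤ b) (hY : Measurable[m'] Y) (hZ : Measurable[m'] Z) :
    Measurable[m'] fun ω => dnF a b e (Y ω) (Z ω) := by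
  refine Measurable.isLUB (f := fun n ω => if e n ≤ Z ω then cl a b (Y ω n) else a)
    (fun n => Measurable.ite (measurableSet_le measurable_const hZ)
      (measurable_const.max (((measurable_pi_apply n).comp hY).min measurable_const))
      measurable_const) (fun ω => ?_)
  exact isLUB_ciSup (dnF_bddAbove hab)

lemma measurable_upC_comp {Ω : Type*} {m' : MeasurableSpace Ω} {Y : ℕ → Ω → ℕ → ℝ}
    (hab : a ≤ b) :
    ∀ n {Z : Ω → ℝ}, (∀ j, j ≤ n → Measurable[m'] (Y j)) → Measurable[m'] Z →
      Measurable[m'] fun ω => upC a b e (fun j => Y j ω) n (Z ω) := by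
  intro n
  induction n with
  | zero => exact fun hY hZ => measurable_upF_comp hab (hY 0 le_rfl) hZ
  | succ n ih =>
      intro Z hY hZ
      exact ih (fun j hj => hY j (hj.trans n.le_succ))
        (measurable_upF_comp hab (hY (n + 1) le_rfl) hZ)

lemma measurable_dnC_comp {Ω : Type*} {m' : MeasurableSpace Ω} {Y : ℕ → Ω → ℕ → ℝ}
    (hab : a ≤ b) :
    ∀ n {Z : Ω → ℝ}, (∀ j, j ≤ n → Measurable[m'] (Y j)) → Measurable[m'] Z →
      Measurable[m'] fun ω => dnC a b e (fun j => Y j ω) n (Z ω) := by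
  intro n
  induction n with
  | zero => exact fun hY hZ => measurable_dnF_comp hab (hY 0 le_rfl) hZ
  | succ n ih =>
      intro Z hY hZ
      exact ih (fun j hj => hY j (hj.trans n.le_succ))
        (measurable_dnF_comp hab (hY (n + 1) le_rfl) hZ)

end Meas


/-! ### Counting jump points -/

section Count

lemma sum_gap_le {u d : ℝ → ℝ} {a : ℝ} (T : Finset ℝ) :
    ∀ (c : ℝ), a ≤ c → (∀ z ∈ T, a ≤ d z) → (∀ z ∈ T, u z ≤ c) →
    (∀ z₁ ∈ T, ∀ z₂ ∈ T, z₁ < z₂ → u z₁ ≤ d z₂) →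
    ∑ z ∈ T, (u z - d z) ≤ c - a := by
  classical
  induction T using Finset.induction_on_max with
  | empty => intro c hc _ _ _; simpa using by linarith
  | insert w s hmax ih =>
      intro c hc hd hu ho
      have hw : w ∉ s := fun hws => lt_irrefl w (hmax w hws)
      rw [Finset.sum_insert hw]
      have h1 : ∑ z ∈ s, (u z - d z) ≤ d w - a := by
        refine ih (d w) (hd w (Finset.mem_insert_self _ _)) ?_ ?_ ?_
        · exact fun z hz => hd z (Finset.mem_insert_of_mem hz)
        · exact fun z hz => ho z (Finset.mem_insert_of_mem hz) w
            (Finset.mem_insert_self _ _) (hmax z hz)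
        · exact fun z₁ h₁ z₂ h₂ h => ho z₁ (Finset.mem_insert_of_mem h₁) z₂
            (Finset.mem_insert_of_mem h₂) h
      have h2 : u w ≤ c := hu w (Finset.mem_insert_self _ _)
      have h3 : a ≤ d w := hd w (Finset.mem_insert_self _ _)
      linarith

lemma card_gap_le {u d : ℝ → ℝ} {a c δ : ℝ} (T : Finset ℝ) (hc : a ≤ c)
    (hd : ∀ z ∈ T, a ≤ d z) (hu : ∀ z ∈ T, u z ≤ c)
    (ho : ∀ z₁ ∈ T, ∀ z₂ ∈ T, z₁ < z₂ → u z₁ ≤ d z₂)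
    (hgap : ∀ z ∈ T, δ ≤ u z - d z) :
    (T.card : ℝ) * δ ≤ c - a := by
  calc (T.card : ℝ) * δ = ∑ _z ∈ T, δ := by rw [Finset.sum_const, nsmul_eq_mul]
  _ ≤ ∑ z ∈ T, (u z - d z) := Finset.sum_le_sum hgap
  _ ≤ c - a := sum_gap_le T c hc hd hu ho

lemma countable_J {a b : ℝ} (hab : a ≤ b) (e₀ : ℕ → ℝ)
    (hdense : ∀ z₁ z₂, a ≤ z₁ → z₁ < z₂ → z₂ ≤ b → ∃ n, z₁ ≤ e₀ n ∧ e₀ n ≤ z₂)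
    (μ : Measure (ℕ → ℝ)) [IsProbabilityMeasure μ] :
    Set.Countable {z ∈ Icc a b | 0 < μ {y | dnF a b e₀ y z < upF a b e₀ y z}} := by
  classical
  set A : ℝ → ℕ → Set (ℕ → ℝ) :=
    fun z r => {y | 1 / ((r : ℝ) + 1) ≤ upF a b e₀ y z - dnF a b e₀ y z} with hA
  have hupm : ∀ z : ℝ, Measurable fun y : ℕ → ℝ => upF a b e₀ y z := fun z =>
    measurable_upF_comp hab measurable_id measurable_const
  have hdnm : ∀ z : ℝ, Measurable fun y : ℕ → ℝ => dnF a b e₀ y z := fun z =>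
    measurable_dnF_comp hab measurable_id measurable_const
  have hAm : ∀ z r, MeasurableSet (A z r) := fun z r =>
    measurableSet_le measurable_const ((hupm z).sub (hdnm z))
  have horder : ∀ (y : ℕ → ℝ) (z₁ z₂ : ℝ), a ≤ z₁ → z₁ < z₂ → z₂ ≤ b →
      upF a b e₀ y z₁ ≤ dnF a b e₀ y z₂ := by
    intro y z₁ z₂ h1 h2 h3
    obtain ⟨n, hn1, hn2⟩ := hdense z₁ z₂ h1 h2 h3
    exact (upF_le_cl hab hn1).trans (cl_le_dnF hab hn2)
  set Jnr : ℕ → ℕ → Set ℝ :=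
    fun n r => {z ∈ Icc a b | ((n : ℝ≥0∞) + 1)⁻¹ ≤ μ (A z r)} with hJnr
  have hfin : ∀ n r, (Jnr n r).Finite := by
    intro n r
    by_contra hinf
    have hinf : (Jnr n r).Infinite := hinf
    set Kc : ℕ := Nat.ceil (((r : ℝ) + 1) * (b - a)) with hKc
    obtain ⟨T, hTsub, hTcard⟩ := hinf.exists_subset_card_eq ((n + 1) * (Kc + 1))
    -- pointwise cardinality bound
    have key1 : ∀ y : ℕ → ℝ, ((T.filter fun z => y ∈ A z r).card : ℝ) ≤ Kc := by
      intro y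
      have hsub2 : ∀ z ∈ T.filter fun z => y ∈ A z r, z ∈ Icc a b := by
        intro z hz
        exact (hTsub (Finset.mem_filter.1 hz).1).1
      have := card_gap_le (u := fun z => upF a b e₀ y z) (d := fun z => dnF a b e₀ y z)
        (δ := 1 / ((r : ℝ) + 1)) (T.filter fun z => y ∈ A z r) hab
        (fun z _ => a_le_dnF hab) (fun z _ => upF_le_b hab)
        (fun z₁ h₁ z₂ h₂ h => horder y z₁ z₂ (hsub2 z₁ h₁).1 h (hsub2 z₂ h₂).2)
        (fun z hz => (Finset.mem_filter.1 hz).2)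
      have hrpos : (0 : ℝ) < (r : ℝ) + 1 := by positivity
      have h2 := mul_le_mul_of_nonneg_right this hrpos.le
      rw [mul_assoc, one_div_mul_cancel (ne_of_gt hrpos), mul_one] at h2
      have h3 : ((T.filter fun z => y ∈ A z r).card : ℝ) ≤ ((r : ℝ) + 1) * (b - a) := by
        linarith [h2]
      exact h3.trans (Nat.le_ceil _)
    have key1' : ∀ y : ℕ → ℝ, ∑ z ∈ T, (A z r).indicator (fun _ => (1 : ℝ≥0∞)) y
        ≤ (Kc : ℝ≥0∞) := by
      intro y
      have : ∑ z ∈ T, (A z r).indicator (fun _ => (1 : ℝ≥0∞)) y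
          = ((T.filter fun z => y ∈ A z r).card : ℝ≥0∞) := by
        simp only [Set.indicator_apply]
        rw [Finset.sum_boole]
      rw [this]
      have hnat : (T.filter fun z => y ∈ A z r).card ≤ Kc := by exact_mod_cast key1 y
      exact_mod_cast hnat
    have key2 : ∑ z ∈ T, μ (A z r) ≤ (Kc : ℝ≥0∞) := by
      have heq : ∫⁻ y, ∑ z ∈ T, (A z r).indicator (fun _ => (1 : ℝ≥0∞)) y ∂μ
          = ∑ z ∈ T, μ (A z r) :=
        (lintegral_finset_sum _ (fun z _ => (measurable_one.indicator (hAm z r)))).trans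
          (Finset.sum_congr rfl fun z _ => lintegral_indicator_one (hAm z r))
      rw [← heq]
      calc ∫⁻ y, ∑ z ∈ T, (A z r).indicator (fun _ => (1 : ℝ≥0∞)) y ∂μ
          ≤ ∫⁻ _y, (Kc : ℝ≥0∞) ∂μ := lintegral_mono key1'
      _ = (Kc : ℝ≥0∞) := by simp
    have key3 : ((T.card : ℝ≥0∞)) * ((n : ℝ≥0∞) + 1)⁻¹ ≤ ∑ z ∈ T, μ (A z r) := by
      have := Finset.card_nsmul_le_sum T (fun z => μ (A z r)) (((n : ℝ≥0∞) + 1)⁻¹)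
        (fun z hz => (hTsub hz).2)
      rwa [nsmul_eq_mul] at this
    have hne0 : ((n : ℝ≥0∞) + 1) ≠ 0 := by simp
    have hnetop : ((n : ℝ≥0∞) + 1) ≠ ⊤ := by simp
    have hcalc : ((T.card : ℝ≥0∞)) * ((n : ℝ≥0∞) + 1)⁻¹ = (Kc : ℝ≥0∞) + 1 := by
      rw [hTcard]
      push_cast
      rw [mul_comm ((n : ℝ≥0∞) + 1), mul_assoc, ENNReal.mul_inv_cancel hne0 hnetop, mul_one]
    rw [hcalc] at key3
    have hfinal : (Kc : ℝ≥0∞) + 1 ≤ (Kc : ℝ≥0∞) := key3.trans key2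
    exact (ENNReal.lt_add_right (ENNReal.natCast_ne_top Kc) one_ne_zero).not_ge hfinal
  have hsub : {z ∈ Icc a b | 0 < μ {y | dnF a b e₀ y z < upF a b e₀ y z}}
      ⊆ ⋃ n, ⋃ r, Jnr n r := by
    intro z hz
    obtain ⟨hzI, hzpos⟩ := hz
    have hcup : {y | dnF a b e₀ y z < upF a b e₀ y z} = ⋃ r, A z r := by
      ext y
      simp only [Set.mem_setOf_eq, Set.mem_iUnion, hA]
      constructor
      · intro h
        obtain ⟨r, hr⟩ := exists_nat_one_div_lt (sub_pos.2 h)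
        exact ⟨r, by push_cast; exact hr.le⟩
      · intro ⟨r, hr⟩
        have h0r : (0 : ℝ) < 1 / ((r : ℝ) + 1) := by positivity
        linarith
    rw [hcup] at hzpos
    have : ∃ r, μ (A z r) ≠ 0 := by
      by_contra hc
      push_neg at hc
      have : μ (⋃ r, A z r) = 0 := measure_iUnion_null hc
      rw [this] at hzpos
      exact lt_irrefl _ hzpos
    obtain ⟨r, hr⟩ := this
    obtain ⟨n, hn⟩ := ENNReal.exists_inv_nat_lt hr
    refine Set.mem_iUnion.2 ⟨n, Set.mem_iUnion.2 ⟨r, hzI, ?_⟩⟩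
    refine le_trans ?_ hn.le
    gcongr
    exact le_self_add
  exact (Set.countable_iUnion fun n => Set.countable_iUnion fun r =>
    (hfin n r).countable).mono hsub

end Count

/-! ### Threshold extraction -/

lemma exists_threshold {Ω : Type*} [MeasurableSpace Ω] (P : Measure Ω) [IsProbabilityMeasure P]
    {a b : ℝ} {X Y : Ω → ℝ} (hXm : Measurable X) (hYm : Measurable Y)
    (hXa : ∀ ω, a ≤ X ω) (hXb : ∀ ω, X ω ≤ b) (hYa : ∀ ω, a ≤ Y ω) (hYb : ∀ ω, Y ω ≤ b)
    (hpos : 0 < P {ω | Y ω ≤ X ω}) :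
    ∃ t, a ≤ t ∧ t ≤ b ∧ 0 < P {ω | t ≤ X ω} ∧ 0 < P {ω | Y ω ≤ t} := by
  classical
  set S : Set ℝ := {s | 0 < P {ω | Y ω ≤ s}} with hS
  have hbS : b ∈ S := by
    have : {ω | Y ω ≤ b} = Set.univ := Set.eq_univ_of_forall fun ω => hYb ω
    simp only [hS, Set.mem_setOf_eq, this, measure_univ]
    exact one_pos
  have hSbd : BddBelow S := by
    refine ⟨a, fun s hs => ?_⟩
    by_contra hcon
    push_neg at hcon
    have : {ω | Y ω ≤ s} = ∅ := by
      ext ω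
      simp only [Set.mem_setOf_eq, Set.mem_empty_iff_false, iff_false, not_le]
      exact hcon.trans_le (hYa ω)
    simp only [hS, Set.mem_setOf_eq, this, measure_empty] at hs
    exact lt_irrefl _ hs
  set t₀ : ℝ := sInf S with ht₀
  have hat₀ : a ≤ t₀ := le_csInf ⟨b, hbS⟩ fun s hs => by
    by_contra hcon
    push_neg at hcon
    have : {ω | Y ω ≤ s} = ∅ := by
      ext ω
      simp only [Set.mem_setOf_eq, Set.mem_empty_iff_false, iff_false, not_le]
      exact hcon.trans_le (hYa ω)
    simp only [hS, Set.mem_setOf_eq, this, measure_empty] at hs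
    exact lt_irrefl _ hs
  have ht₀b : t₀ ≤ b := csInf_le hSbd hbS
  have hnull : P {ω | Y ω < t₀} = 0 := by
    have hsub : {ω | Y ω < t₀} ⊆ ⋃ n : ℕ, {ω | Y ω ≤ t₀ - 1 / ((n : ℝ) + 1)} := by
      intro ω hω
      have hωx : Y ω < t₀ := hω
      obtain ⟨n, hn⟩ := exists_nat_one_div_lt (sub_pos.2 hωx)
      exact Set.mem_iUnion.2 ⟨n, by simp only [Set.mem_setOf_eq]; linarith⟩
    refine measure_mono_null hsub (measure_iUnion_null fun n => ?_)
    by_contra hcon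
    have hmem : t₀ - 1 / ((n : ℝ) + 1) ∈ S := by
      simp only [hS, Set.mem_setOf_eq]
      exact pos_iff_ne_zero.2 hcon
    have := csInf_le hSbd hmem
    have hpos' : (0 : ℝ) < 1 / ((n : ℝ) + 1) := by positivity
    rw [← ht₀] at this
    linarith
  have hXpos : 0 < P {ω | t₀ ≤ X ω} := by
    have hsub : {ω | Y ω ≤ X ω} ⊆ {ω | Y ω < t₀} ∪ {ω | t₀ ≤ X ω} := by
      intro ω hω
      rcases lt_or_ge (Y ω) t₀ with h | h
      · exact Or.inl h
      · exact Or.inr (h.trans hω)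
    have := (measure_mono hsub).trans (measure_union_le (μ := P) _ _)
    rw [hnull, zero_add] at this
    exact hpos.trans_le this
  by_cases hcase : 0 < P {ω | Y ω ≤ t₀}
  · exact ⟨t₀, hat₀, ht₀b, hXpos, hcase⟩
  · have hY0 : P {ω | Y ω ≤ t₀} = 0 := by
      by_contra h
      exact hcase (pos_iff_ne_zero.2 h)
    have hGpos : 0 < P ({ω | Y ω ≤ X ω} ∩ {ω | t₀ < Y ω}) := by
      have hsub : {ω | Y ω ≤ X ω} ⊆ ({ω | Y ω ≤ X ω} ∩ {ω | t₀ < Y ω}) ∪ {ω | Y ω ≤ t₀} := by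
        intro ω hω
        rcases le_or_gt (Y ω) t₀ with h | h
        · exact Or.inr h
        · exact Or.inl ⟨hω, h⟩
      have := (measure_mono hsub).trans (measure_union_le (μ := P) _ _)
      rw [hY0, add_zero] at this
      exact hpos.trans_le this
    have : ∃ q : ℚ, t₀ < (q : ℝ) ∧ 0 < P {ω | (q : ℝ) ≤ X ω} := by
      by_contra hcon
      push_neg at hcon
      have hsub : ({ω | Y ω ≤ X ω} ∩ {ω | t₀ < Y ω})
          ⊆ ⋃ q : ℚ, if t₀ < (q : ℝ) then {ω | (q : ℝ) ≤ X ω} else (∅ : Set Ω) := by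
        intro ω ⟨h1, h2⟩
        have h2x : t₀ < Y ω := h2
        have h1x : Y ω ≤ X ω := h1
        obtain ⟨q, hq1, hq2⟩ := exists_rat_btwn h2x
        refine Set.mem_iUnion.2 ⟨q, ?_⟩
        rw [if_pos hq1]
        exact Set.mem_setOf_eq ▸ (hq2.le.trans h1x)
      have hnull2 : P (⋃ q : ℚ, if t₀ < (q : ℝ) then {ω | (q : ℝ) ≤ X ω} else (∅ : Set Ω))
          = 0 := by
        refine measure_iUnion_null fun q => ?_
        split_ifs with h
        · exact le_zero_iff.1 (hcon q h)
        · exact measure_empty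
      have := (measure_mono hsub).trans_eq hnull2
      exact lt_irrefl 0 (hGpos.trans_le this)
    obtain ⟨q, hq1, hq2⟩ := this
    have hqb : (q : ℝ) ≤ b := by
      by_contra hcon
      push_neg at hcon
      have : {ω | (q : ℝ) ≤ X ω} = ∅ := by
        ext ω
        simp only [Set.mem_setOf_eq, Set.mem_empty_iff_false, iff_false, not_le]
        exact (hXb ω).trans_lt hcon
      rw [this, measure_empty] at hq2
      exact lt_irrefl _ hq2
    have hqS : 0 < P {ω | Y ω ≤ (q : ℝ)} := by
      obtain ⟨s, hsS, hsq⟩ := exists_lt_of_csInf_lt ⟨b, hbS⟩ (ht₀ ▸ hq1)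
      have hsS' : 0 < P {ω | Y ω ≤ s} := hsS
      have hmono2 : P {ω | Y ω ≤ s} ≤ P {ω | Y ω ≤ (q : ℝ)} := by
        refine measure_mono fun ω hω => ?_
        have hω' : Y ω ≤ s := hω
        exact Set.mem_setOf_eq ▸ (hω'.trans hsq.le)
      exact hsS'.trans_le hmono2
    exact ⟨q, hat₀.trans hq1.le, hqb, hq2, hqS⟩

/-! ### iIndepFun is stable under a.e. modification -/

lemma iIndepFun_congr_ae {Ω ι : Type*} {β : ι → Type*} [MeasurableSpace Ω]
    [m : ∀ i, MeasurableSpace (β i)] {P : Measure Ω} {f g : ∀ i, Ω → β i}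
    (h : iIndepFun f P) (hae : ∀ i, f i =ᵐ[P] g i) : iIndepFun g P := by
  rw [iIndepFun_iff_measure_inter_preimage_eq_mul] at h ⊢
  intro S sets hsets
  have hset : ∀ i, (g i ⁻¹' sets i : Set Ω) =ᵐ[P] (f i ⁻¹' sets i) := fun i =>
    eventuallyEq_set.2 ((hae i).mono fun ω hω => by
      simp only [Set.mem_preimage, hω])
  have h1 : ((⋂ i ∈ S, g i ⁻¹' sets i : Set Ω)) =ᵐ[P] ((⋂ i ∈ S, f i ⁻¹' sets i : Set Ω)) := by
    refine eventuallyEq_set.2 ?_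
    have h2 := (ae_ball_iff S.countable_toSet).2 fun i (_ : i ∈ (S : Set ι)) =>
      eventuallyEq_set.1 (hset i)
    refine h2.mono fun ω hω => ?_
    simp only [Set.mem_iInter]
    exact ⟨fun hgi i hi => (hω i hi).1 (hgi i hi), fun hfi i hi => (hω i hi).2 (hfi i hi)⟩
  rw [measure_congr h1, h S hsets]
  exact (Finset.prod_congr rfl fun i _ => (measure_congr (hset i)).symm)

end

end S9

open scoped ENNReal NNReal

open S9 in
theorem stmt_9 {Ω : Type*} [MeasurableSpace Ω] (P : Measure Ω) [IsProbabilityMeasure P]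
    (a b : ℝ) (hab : a ≤ b)
    (f : ℕ → Ω → (Set.Icc a b → Set.Icc a b))
    (hindep : iIndepFun f P)
    (hident : ∀ i, IdentDistrib (f i) (f 0) P P)
    (hmono : ∀ i, ∀ᵐ ω ∂P, Monotone (f i ω))
    (hpos : 0 < P {ω | f 1 ω ⟨b, hab, le_refl b⟩ ≤ f 0 ω ⟨a, le_refl a, hab⟩}) :
    ∀ᵐ ω ∂P, ∃ L : Set.Icc a b,
      Tendsto (fun n => ⨆ x : Set.Icc a b,
          |(compIter (fun i => f i ω) n x).1 - (L : ℝ)|)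
        atTop (nhds 0) := by
  classical
  haveI hIne : Nonempty (Set.Icc a b) := ⟨⟨a, le_rfl, hab⟩⟩
  set pa : Set.Icc a b := ⟨a, le_rfl, hab⟩ with hpa
  set pb : Set.Icc a b := ⟨b, hab, le_rfl⟩ with hpb
  have haem : ∀ i, AEMeasurable (f i) P := fun i => (hident i).aemeasurable_fst
  have hevalm : ∀ x : Set.Icc a b,
      Measurable fun w : Set.Icc a b → Set.Icc a b => (w x : ℝ) :=
    fun x => measurable_subtype_coe.comp (measurable_pi_apply x)
  -- threshold
  set X0 : Ω → ℝ := fun ω => (f 0 ω pa : ℝ) with hX0def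
  set Y0 : Ω → ℝ := fun ω => (f 1 ω pb : ℝ) with hY0def
  have hX0 : AEMeasurable X0 P := (hevalm pa).comp_aemeasurable (haem 0)
  have hY0 : AEMeasurable Y0 P := (hevalm pb).comp_aemeasurable (haem 1)
  set X : Ω → ℝ := fun ω => cl a b (hX0.mk X0 ω) with hXdef
  set Y : Ω → ℝ := fun ω => cl a b (hY0.mk Y0 ω) with hYdef
  have hXm : Measurable X := measurable_const.max (hX0.measurable_mk.min measurable_const)
  have hYm : Measurable Y := measurable_const.max (hY0.measurable_mk.min measurable_const)
  have hXae : ∀ᵐ ω ∂P, X ω = X0 ω := by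
    filter_upwards [hX0.ae_eq_mk] with ω h
    rw [hXdef]
    dsimp only
    rw [← h, hX0def]
    exact cl_eq (f 0 ω pa).2.1 (f 0 ω pa).2.2
  have hYae : ∀ᵐ ω ∂P, Y ω = Y0 ω := by
    filter_upwards [hY0.ae_eq_mk] with ω h
    rw [hYdef]
    dsimp only
    rw [← h, hY0def]
    exact cl_eq (f 1 ω pb).2.1 (f 1 ω pb).2.2
  have hpos' : 0 < P {ω | Y ω ≤ X ω} := by
    have hset : {ω | Y0 ω ≤ X0 ω} = {ω | f 1 ω pb ≤ f 0 ω pa} := by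
      ext ω
      simp only [Set.mem_setOf_eq]
      exact Subtype.coe_le_coe
    have hae2 : ({ω | Y ω ≤ X ω} : Set Ω) =ᵐ[P] {ω | Y0 ω ≤ X0 ω} := by
      refine eventuallyEq_set.2 ?_
      filter_upwards [hXae, hYae] with ω h1 h2
      simp only [Set.mem_setOf_eq, h1, h2]
    rw [measure_congr hae2, hset]
    exact hpos
  obtain ⟨t, hta, htb, hαpos, hβpos⟩ := exists_threshold P hXm hYm
    (fun ω => le_cl) (fun ω => cl_le hab) (fun ω => le_cl) (fun ω => cl_le hab) hpos'
  -- base grid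
  set Q0 : Set ℝ := (Set.range (fun q : ℚ => (q : ℝ)) ∩ Set.Icc a b) ∪ {a, b, t} with hQ0def
  have hQ0sub : Q0 ⊆ Set.Icc a b := by
    rintro z (⟨_, hz⟩ | hz)
    · exact hz
    · rcases hz with rfl | rfl | rfl
      · exact ⟨le_rfl, hab⟩
      · exact ⟨hab, le_rfl⟩
      · exact ⟨hta, htb⟩
  have hQ0c : Q0.Countable :=
    ((Set.countable_range _).mono Set.inter_subset_left).union
      ((Set.toFinite ({a, b, t} : Set ℝ)).countable)
  have haQ0 : a ∈ Q0 := Or.inr (by simp)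
  have hbQ0 : b ∈ Q0 := Or.inr (by simp)
  have htQ0 : t ∈ Q0 := Or.inr (by simp)
  obtain ⟨e₀, he₀⟩ := hQ0c.exists_eq_range ⟨a, haQ0⟩
  have he₀mem : ∀ n, e₀ n ∈ Set.Icc a b := fun n => hQ0sub (he₀ ▸ Set.mem_range_self n)
  have hdense0 : ∀ z₁ z₂, a ≤ z₁ → z₁ < z₂ → z₂ ≤ b → ∃ n, z₁ ≤ e₀ n ∧ e₀ n ≤ z₂ := by
    intro z₁ z₂ h1 h2 h3
    obtain ⟨q, hq1, hq2⟩ := exists_rat_btwn h2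
    have hmem : (q : ℝ) ∈ Q0 := Or.inl ⟨⟨q, rfl⟩, ⟨h1.trans hq1.le, hq2.le.trans h3⟩⟩
    rw [he₀] at hmem
    obtain ⟨n, hn⟩ := hmem
    exact ⟨n, by rw [hn]; exact hq1.le, by rw [hn]; exact hq2.le⟩
  -- law of the base tuple and the jump set J
  set φ0 : (Set.Icc a b → Set.Icc a b) → (ℕ → ℝ) := fun w n => (w ⟨e₀ n, he₀mem n⟩ : ℝ)
    with hφ0def
  have hφ0m : Measurable φ0 := measurable_pi_lambda _ fun n => hevalm _
  set μ0 : Measure (ℕ → ℝ) := P.map (fun ω => φ0 (f 0 ω)) with hμ0def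
  haveI : IsProbabilityMeasure μ0 :=
    Measure.isProbabilityMeasure_map (hφ0m.comp_aemeasurable (haem 0))
  set J : Set ℝ := {z ∈ Set.Icc a b | 0 < μ0 {y | dnF a b e₀ y z < upF a b e₀ y z}} with hJdef
  have hJc : J.Countable := countable_J hab e₀ hdense0 μ0
  obtain ⟨eJ, heJ⟩ := (hJc.insert a).exists_eq_range ⟨a, Set.mem_insert _ _⟩
  have heJmem : ∀ n, eJ n ∈ Set.Icc a b := by
    intro n
    have hmem : eJ n ∈ insert a J := heJ ▸ Set.mem_range_self n
    rcases hmem with rfl | hmem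
    · exact ⟨le_rfl, hab⟩
    · exact hmem.1
  -- full grid
  set e : ℕ → ℝ := fun n => if n % 2 = 0 then e₀ (n / 2) else eJ (n / 2) with hedef
  have hemem : ∀ n, e n ∈ Set.Icc a b := by
    intro n
    rw [hedef]
    dsimp only
    split
    · exact he₀mem _
    · exact heJmem _
  set pe : ℕ → Set.Icc a b := fun n => ⟨e n, hemem n⟩ with hpedef
  have hpe : ∀ n, (pe n : ℝ) = e n := fun n => rfl
  have heven : ∀ k, e (2 * k) = e₀ k := by
    intro k
    rw [hedef]
    dsimp only
    rw [if_pos (Nat.mul_mod_right 2 k), Nat.mul_div_cancel_left k (by norm_num)]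
  have hodd : ∀ k, e (2 * k + 1) = eJ k := by
    intro k
    rw [hedef]
    dsimp only
    have h1 : (2 * k + 1) % 2 = 1 := by omega
    have h2 : (2 * k + 1) / 2 = k := by omega
    rw [h1, h2]
    norm_num
  set Dset : Set ℝ := Q0 ∪ insert a J with hDdef
  have hDc : Dset.Countable := hQ0c.union (hJc.insert a)
  have hDrange : ∀ z ∈ Dset, ∃ n, e n = z := by
    rintro z (hz | hz)
    · rw [he₀] at hz
      obtain ⟨k, hk⟩ := hz
      exact ⟨2 * k, by rw [heven]; exact hk⟩
    · rw [heJ] at hz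
      obtain ⟨k, hk⟩ := hz
      exact ⟨2 * k + 1, by rw [hodd]; exact hk⟩
  obtain ⟨na, hna⟩ := hDrange a (Or.inl haQ0)
  obtain ⟨nb, hnb⟩ := hDrange b (Or.inl hbQ0)
  -- the measurable tuple family
  set φg : (Set.Icc a b → Set.Icc a b) → (ℕ → ℝ) := fun w n => (w (pe n) : ℝ) with hφgdef
  have hφgm : Measurable φg := measurable_pi_lambda _ fun n => hevalm _
  have htup : ∀ i, AEMeasurable (fun ω => φg (f i ω)) P :=
    fun i => hφgm.comp_aemeasurable (haem i)
  set Yb : ℕ → Ω → ℕ → ℝ := fun i => (htup i).mk _ with hYbdef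
  have hYbm : ∀ i, Measurable (Yb i) := fun i => (htup i).measurable_mk
  have hlink : ∀ i, (fun ω => φg (f i ω)) =ᵐ[P] Yb i := fun i => (htup i).ae_eq_mk
  have hYindep : iIndepFun Yb P :=
    iIndepFun_congr_ae (hindep.comp (fun _ => φg) (fun _ => hφgm)) hlink
  have hYlaw : ∀ i, P.map (Yb i) = P.map (Yb 0) := by
    intro i
    calc P.map (Yb i) = P.map (fun ω => φg (f i ω)) := (Measure.map_congr (hlink i)).symm
    _ = P.map (fun ω => φg (f 0 ω)) := ((hident i).comp hφgm).map_eq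
    _ = P.map (Yb 0) := Measure.map_congr (hlink 0)
  -- sub-σ-algebras
  set mS : Finset ℕ → MeasurableSpace Ω :=
    fun S => MeasurableSpace.comap (fun ω (i : S) => Yb i ω) inferInstance with hmSdef
  have hTSm : ∀ S : Finset ℕ, Measurable (fun ω (i : S) => Yb i ω) :=
    fun S => measurable_pi_lambda _ fun i => hYbm i
  have hmS_le : ∀ S, mS S ≤ ‹MeasurableSpace Ω› := fun S => (hTSm S).comap_le
  have hTS0 : ∀ S : Finset ℕ, Measurable[mS S] (fun ω (i : S) => Yb i ω) := by
    intro S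
    rw [hmSdef]
    exact Measurable.of_comap_le le_rfl
  have hcoord : ∀ S : Finset ℕ, ∀ j ∈ S, Measurable[mS S] (Yb j) := by
    intro S j hj
    exact (measurable_pi_apply (⟨j, hj⟩ : S)).comp (hTS0 S)
  have hmSmono : ∀ S S' : Finset ℕ, S ⊆ S' → mS S ≤ mS S' := by
    intro S S' hsub
    have h1 : Measurable[mS S'] (fun ω (i : S) => Yb i ω) :=
      (@measurable_pi_iff Ω S (fun _ => ℕ → ℝ) (mS S') (fun _ => inferInstance) _).mpr
        (fun i => hcoord S' i (hsub i.2))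
    calc mS S = MeasurableSpace.comap (fun ω (i : S) => Yb i ω) inferInstance := by rw [hmSdef]
    _ ≤ mS S' := measurable_iff_comap_le.mp h1
  have hIndep2 : ∀ S T : Finset ℕ, Disjoint S T → ∀ (A B : Set Ω),
      MeasurableSet[mS S] A → MeasurableSet[mS T] B → P (A ∩ B) = P A * P B := by
    intro S T hST A B hA hB
    have h1 := hYindep.indepFun_finset S T hST hYbm
    rw [IndepFun_iff_Indep] at h1
    rw [Indep_iff] at h1
    exact h1 A B hA hB
  have hIndepFun2 : ∀ (j : ℕ) (S : Finset ℕ), j ∉ S → ∀ (Z : Ω → ℝ),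
      Measurable[mS S] Z → IndepFun Z (Yb j) P := by
    intro j S hj Z hZ
    have h1 := hYindep.indepFun_finset S {j} (by simpa using hj) hYbm
    rw [IndepFun_iff_Indep, Indep_iff] at h1
    rw [IndepFun_iff_Indep, Indep_iff]
    intro t1 t2 ht1 ht2
    refine h1 t1 t2 (hZ.comap_le _ ht1) ?_
    exact ((hcoord {j} j (by simp)).comap_le) _ ht2
  -- events
  set Uev : ℕ → Set Ω := fun m => {ω | t ≤ cl a b (Yb m ω na)} with hUdef
  set Lev : ℕ → Set Ω := fun m => {ω | cl a b (Yb m ω nb) ≤ t} with hLdef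
  have hclm : ∀ (m k : ℕ), Measurable (fun ω => cl a b (Yb m ω k)) := fun m k =>
    measurable_const.max (((measurable_pi_apply k).comp (hYbm m)).min measurable_const)
  have hUmeas : ∀ m, MeasurableSet (Uev m) := fun m =>
    measurableSet_le measurable_const (hclm m na)
  have hLmeas : ∀ m, MeasurableSet (Lev m) := fun m =>
    measurableSet_le (hclm m nb) measurable_const
  have hclmS : ∀ (S : Finset ℕ) (m : ℕ), m ∈ S → ∀ k,
      Measurable[mS S] fun ω => cl a b (Yb m ω k) := fun S m hm k =>
    Measurable.max measurable_const
      (Measurable.min ((measurable_pi_apply k).comp (hcoord S m hm)) measurable_const)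
  have hUmS : ∀ (S : Finset ℕ) (m : ℕ), m ∈ S → MeasurableSet[mS S] (Uev m) :=
    fun S m hm => measurableSet_le measurable_const (hclmS S m hm na)
  have hLmS : ∀ (S : Finset ℕ) (m : ℕ), m ∈ S → MeasurableSet[mS S] (Lev m) :=
    fun S m hm => measurableSet_le (hclmS S m hm nb) measurable_const
  have hUconst : ∀ m, P (Uev m) = P (Uev 0) := by
    intro m
    have hms : MeasurableSet {y : ℕ → ℝ | t ≤ cl a b (y na)} :=
      measurableSet_le measurable_const
        (measurable_const.max ((measurable_pi_apply na).min measurable_const))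
    have h1 : Uev m = Yb m ⁻¹' {y | t ≤ cl a b (y na)} := rfl
    have h2 : Uev 0 = Yb 0 ⁻¹' {y | t ≤ cl a b (y na)} := rfl
    rw [h1, h2, ← Measure.map_apply (hYbm m) hms, ← Measure.map_apply (hYbm 0) hms, hYlaw m]
  have hLconst : ∀ m, P (Lev m) = P (Lev 0) := by
    intro m
    have hms : MeasurableSet {y : ℕ → ℝ | cl a b (y nb) ≤ t} :=
      measurableSet_le
        (measurable_const.max ((measurable_pi_apply nb).min measurable_const)) measurable_const
    have h1 : Lev m = Yb m ⁻¹' {y | cl a b (y nb) ≤ t} := rfl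
    have h2 : Lev 0 = Yb 0 ⁻¹' {y | cl a b (y nb) ≤ t} := rfl
    rw [h1, h2, ← Measure.map_apply (hYbm m) hms, ← Measure.map_apply (hYbm 0) hms, hYlaw m]
  have hpea : pe na = pa := Subtype.ext (by rw [hpe, hna])
  have hpeb : pe nb = pb := Subtype.ext (by rw [hpe, hnb])
  have hUpos : 0 < P (Uev 0) := by
    have h1 : ∀ᵐ ω ∂P, cl a b (Yb 0 ω na) = X ω := by
      filter_upwards [hlink 0, hXae] with ω hω hX'
      have h2 : Yb 0 ω na = X0 ω := by
        rw [← hω, hφgdef]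
        dsimp only
        rw [hpea, hX0def]
      rw [h2, hX', hX0def]
      exact cl_eq (f 0 ω pa).2.1 (f 0 ω pa).2.2
    have h2 : Uev 0 =ᵐ[P] {ω | t ≤ X ω} := by
      refine eventuallyEq_set.2 ?_
      filter_upwards [h1] with ω h
      simp only [hUdef, Set.mem_setOf_eq, h]
    rw [measure_congr h2]
    exact hαpos
  have hLpos : 0 < P (Lev 0) := by
    have h1 : ∀ᵐ ω ∂P, cl a b (Yb 1 ω nb) = Y ω := by
      filter_upwards [hlink 1, hYae] with ω hω hY'
      have h2 : Yb 1 ω nb = Y0 ω := by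
        rw [← hω, hφgdef]
        dsimp only
        rw [hpeb, hY0def]
      rw [h2, hY', hY0def]
      exact cl_eq (f 1 ω pb).2.1 (f 1 ω pb).2.2
    have h2 : Lev 1 =ᵐ[P] {ω | Y ω ≤ t} := by
      refine eventuallyEq_set.2 ?_
      filter_upwards [h1] with ω h
      simp only [hLdef, Set.mem_setOf_eq, h]
    rw [← hLconst 1, measure_congr h2]
    exact hβpos
  -- processes
  set An : ℕ → Ω → ℝ := fun n ω => upC a b e (fun j => Yb j ω) n a with hAdef
  set Bn : ℕ → Ω → ℝ := fun n ω => upC a b e (fun j => Yb j ω) n b with hBdef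
  set Tn : ℕ → Ω → ℝ := fun n ω => upC a b e (fun j => Yb j ω) n t with hTdef
  have hprocmS : ∀ (n : ℕ) (S : Finset ℕ), (∀ j, j ≤ n → j ∈ S) → ∀ z : ℝ,
      Measurable[mS S] (fun ω => upC a b e (fun j => Yb j ω) n z) := fun n S hS z =>
    measurable_upC_comp hab n (fun j hj => hcoord S j (hS j hj)) measurable_const
  have hprocm : ∀ (n : ℕ) (z : ℝ),
      Measurable (fun ω => upC a b e (fun j => Yb j ω) n z) := fun n z =>
    ((hprocmS n (Finset.range (n + 1)) (fun j hj => Finset.mem_range.2 (by omega)) z)).mono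
      (hmS_le _) le_rfl
  -- bad events and their null limsup
  set Bad : ℚ → ℕ → Set Ω := fun ε m =>
    ({ω | Bn m ω - Tn m ω < (ε : ℝ)} ∩ Uev (m + 1)) ∪
      ({ω | (ε : ℝ) ≤ Bn m ω - Tn m ω} ∩ Lev (m + 1)) with hBaddef
  have hBadNull : ∀ (ε : ℚ) (M : ℕ), P (⋂ k : ℕ, (Bad ε (M + k))ᶜ) = 0 := by
    intro ε M
    set q : ℝ≥0∞ := max (1 - P (Uev 0)) (1 - P (Lev 0)) with hqdef
    have hq1 : q < 1 := by
      rw [hqdef]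
      refine max_lt ?_ ?_
      · exact ENNReal.sub_lt_self ENNReal.one_ne_top one_ne_zero (ne_of_gt hUpos)
      · exact ENNReal.sub_lt_self ENNReal.one_ne_top one_ne_zero (ne_of_gt hLpos)
    have hWstep : ∀ k : ℕ, P (⋂ j ∈ Finset.range (k + 1), (Bad ε (M + j))ᶜ)
        ≤ q * P (⋂ j ∈ Finset.range k, (Bad ε (M + j))ᶜ) := by
      intro k
      set S : Finset ℕ := Finset.range (M + k + 1) with hSdef
      set W : Set Ω := ⋂ j ∈ Finset.range k, (Bad ε (M + j))ᶜ with hWdef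
      have hsubm : ∀ m : ℕ, Measurable[mS S] (fun ω => Bn m ω - Tn m ω) ∨ True := fun m => Or.inr trivial
      have hHm : ∀ m, m ≤ M + k → Measurable[mS S] (fun ω => Bn m ω - Tn m ω) := by
        intro m hm
        exact Measurable.sub
          (hprocmS m S (fun j hj => Finset.mem_range.2 (by omega)) b)
          (hprocmS m S (fun j hj => Finset.mem_range.2 (by omega)) t)
      have hBadmS : ∀ j, j < k → MeasurableSet[mS S] (Bad ε (M + j)) := by
        intro j hj
        refine MeasurableSet.union ?_ ?_
        · exact (measurableSet_lt (hHm (M + j) (by omega)) measurable_const).inter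
            (hUmS S (M + j + 1) (Finset.mem_range.2 (by omega)))
        · exact (measurableSet_le measurable_const (hHm (M + j) (by omega))).inter
            (hLmS S (M + j + 1) (Finset.mem_range.2 (by omega)))
      have hWmS : MeasurableSet[mS S] W := by
        rw [hWdef]
        refine MeasurableSet.biInter (Finset.range k).countable_toSet ?_
        intro j hj
        exact (hBadmS j (Finset.mem_range.1 hj)).compl
      have hWm : MeasurableSet W := hmS_le S _ hWmS
      have hE1mS : MeasurableSet[mS S] (W ∩ {ω | Bn (M + k) ω - Tn (M + k) ω < (ε : ℝ)}) :=
        hWmS.inter (measurableSet_lt (hHm (M + k) le_rfl) measurable_const)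
      have hE2mS : MeasurableSet[mS S] (W ∩ {ω | (ε : ℝ) ≤ Bn (M + k) ω - Tn (M + k) ω}) :=
        hWmS.inter (measurableSet_le measurable_const (hHm (M + k) le_rfl))
      have hdisj : Disjoint S ({M + k + 1} : Finset ℕ) := by
        simp [hSdef, Finset.disjoint_singleton_right]
      have hsplit : (⋂ j ∈ Finset.range (k + 1), (Bad ε (M + j))ᶜ) =
          ((W ∩ {ω | Bn (M + k) ω - Tn (M + k) ω < (ε : ℝ)}) ∩ (Uev (M + k + 1))ᶜ) ∪
            ((W ∩ {ω | (ε : ℝ) ≤ Bn (M + k) ω - Tn (M + k) ω}) ∩ (Lev (M + k + 1))ᶜ) := by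
        rw [Finset.range_add_one, Finset.set_biInter_insert, ← hWdef, Set.inter_comm]
        ext ω
        constructor
        · rintro ⟨hW, hnb⟩
          rcases lt_or_ge (Bn (M + k) ω - Tn (M + k) ω) (ε : ℝ) with hH | hH
          · refine Or.inl ⟨⟨hW, hH⟩, fun hU => hnb ?_⟩
            exact Or.inl ⟨hH, hU⟩
          · refine Or.inr ⟨⟨hW, hH⟩, fun hL => hnb ?_⟩
            exact Or.inr ⟨hH, hL⟩
        · rintro (⟨⟨hW, hH⟩, hnU⟩ | ⟨⟨hW, hH⟩, hnL⟩)
          · refine ⟨hW, fun hb => ?_⟩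
            rcases hb with ⟨_, hU⟩ | ⟨hge, _⟩
            · exact hnU hU
            · exact absurd (show Bn (M + k) ω - Tn (M + k) ω < (ε : ℝ) from hH)
                (not_lt.2 (show (ε : ℝ) ≤ Bn (M + k) ω - Tn (M + k) ω from hge))
          · refine ⟨hW, fun hb => ?_⟩
            rcases hb with ⟨hlt, _⟩ | ⟨_, hL⟩
            · exact absurd (show Bn (M + k) ω - Tn (M + k) ω < (ε : ℝ) from hlt)
                (not_lt.2 (show (ε : ℝ) ≤ Bn (M + k) ω - Tn (M + k) ω from hH))
            · exact hnL hL
      have hP1 : P ((W ∩ {ω | Bn (M + k) ω - Tn (M + k) ω < (ε : ℝ)}) ∩ (Uev (M + k + 1))ᶜ)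
          = P (W ∩ {ω | Bn (M + k) ω - Tn (M + k) ω < (ε : ℝ)}) * P ((Uev (M + k + 1))ᶜ) :=
        hIndep2 S {M + k + 1} hdisj _ _ hE1mS
          ((hUmS {M + k + 1} (M + k + 1) (Finset.mem_singleton_self _)).compl)
      have hP2 : P ((W ∩ {ω | (ε : ℝ) ≤ Bn (M + k) ω - Tn (M + k) ω}) ∩ (Lev (M + k + 1))ᶜ)
          = P (W ∩ {ω | (ε : ℝ) ≤ Bn (M + k) ω - Tn (M + k) ω}) * P ((Lev (M + k + 1))ᶜ) :=
        hIndep2 S {M + k + 1} hdisj _ _ hE2mS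
          ((hLmS {M + k + 1} (M + k + 1) (Finset.mem_singleton_self _)).compl)
      have hPU : P ((Uev (M + k + 1))ᶜ) = 1 - P (Uev 0) := by
        rw [prob_compl_eq_one_sub (hUmeas _), hUconst]
      have hPL : P ((Lev (M + k + 1))ᶜ) = 1 - P (Lev 0) := by
        rw [prob_compl_eq_one_sub (hLmeas _), hLconst]
      have hWsum : P (W ∩ {ω | Bn (M + k) ω - Tn (M + k) ω < (ε : ℝ)})
          + P (W ∩ {ω | (ε : ℝ) ≤ Bn (M + k) ω - Tn (M + k) ω}) = P W := by
        rw [← measure_union _ (show MeasurableSet (W ∩ {ω | (ε : ℝ) ≤ Bn (M + k) ω - Tn (M + k) ω}) from hWm.inter (measurableSet_le measurable_const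
          ((hprocm (M + k) b).sub (hprocm (M + k) t))))]
        · congr 1
          ext ω
          simp only [Set.mem_union, Set.mem_inter_iff, Set.mem_setOf_eq]
          constructor
          · rintro (⟨h, _⟩ | ⟨h, _⟩) <;> exact h
          · intro h
            rcases lt_or_ge (Bn (M + k) ω - Tn (M + k) ω) (ε : ℝ) with hH | hH
            · exact Or.inl ⟨h, hH⟩
            · exact Or.inr ⟨h, hH⟩
        · refine Set.disjoint_left.2 ?_
          rintro ω ⟨_, h1⟩ ⟨_, h2⟩
          exact absurd (show Bn (M + k) ω - Tn (M + k) ω < (ε : ℝ) from h1)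
            (not_lt.2 (show (ε : ℝ) ≤ Bn (M + k) ω - Tn (M + k) ω from h2))
      calc P (⋂ j ∈ Finset.range (k + 1), (Bad ε (M + j))ᶜ)
          ≤ P ((W ∩ {ω | Bn (M + k) ω - Tn (M + k) ω < (ε : ℝ)}) ∩ (Uev (M + k + 1))ᶜ)
            + P ((W ∩ {ω | (ε : ℝ) ≤ Bn (M + k) ω - Tn (M + k) ω}) ∩ (Lev (M + k + 1))ᶜ) := by
            rw [hsplit]
            exact measure_union_le (μ := P) _ _
      _ = P (W ∩ {ω | Bn (M + k) ω - Tn (M + k) ω < (ε : ℝ)}) * (1 - P (Uev 0))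
            + P (W ∩ {ω | (ε : ℝ) ≤ Bn (M + k) ω - Tn (M + k) ω}) * (1 - P (Lev 0)) := by
            rw [hP1, hP2, hPU, hPL]
      _ ≤ P (W ∩ {ω | Bn (M + k) ω - Tn (M + k) ω < (ε : ℝ)}) * q
            + P (W ∩ {ω | (ε : ℝ) ≤ Bn (M + k) ω - Tn (M + k) ω}) * q := by
            gcongr
            · exact le_max_left _ _
            · exact le_max_right _ _
      _ = q * (P (W ∩ {ω | Bn (M + k) ω - Tn (M + k) ω < (ε : ℝ)})
            + P (W ∩ {ω | (ε : ℝ) ≤ Bn (M + k) ω - Tn (M + k) ω})) := by ring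
      _ = q * P W := by rw [hWsum]
    have hWbound : ∀ k, P (⋂ j ∈ Finset.range k, (Bad ε (M + j))ᶜ) ≤ q ^ k := by
      intro k
      induction k with
      | zero => simp
      | succ k ih =>
          calc P (⋂ j ∈ Finset.range (k + 1), (Bad ε (M + j))ᶜ)
              ≤ q * P (⋂ j ∈ Finset.range k, (Bad ε (M + j))ᶜ) := hWstep k
          _ ≤ q * q ^ k := mul_le_mul_right ih q
          _ = q ^ (k + 1) := by rw [pow_succ, mul_comm]
    refine le_antisymm ?_ zero_le
    refine ge_of_tendsto' (ENNReal.tendsto_pow_atTop_nhds_zero_of_lt_one hq1) fun k => ?_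
    calc P (⋂ k : ℕ, (Bad ε (M + k))ᶜ)
        ≤ P (⋂ j ∈ Finset.range k, (Bad ε (M + j))ᶜ) := by
          refine measure_mono ?_
          intro ω hω
          simp only [Set.mem_iInter] at hω ⊢
          exact fun j _ => hω j
    _ ≤ q ^ k := hWbound k
  -- grid monotonicity a.e.
  have hgmono_ae : ∀ j, ∀ᵐ ω ∂P, gridMono a b e (Yb j ω) := by
    intro j
    filter_upwards [hmono j, hlink j] with ω h1 h2
    intro m n hmn
    have hvm : ∀ k, Yb j ω k = (f j ω (pe k) : ℝ) := fun k => (congrFun h2 k).symm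
    rw [hvm m, hvm n, cl_eq (f j ω (pe m)).2.1 (f j ω (pe m)).2.2,
      cl_eq (f j ω (pe n)).2.1 (f j ω (pe n)).2.2]
    exact Subtype.coe_le_coe.2
      (h1 (Subtype.coe_le_coe.1 (show ((pe m : ℝ)) ≤ ((pe n : ℝ)) from hmn)))
  -- relating the full grid tuple to the base grid tuple
  set extractE : (ℕ → ℝ) → ℕ → ℝ := fun y k => y (2 * k) with hextdef
  have hextm : Measurable extractE := measurable_pi_lambda _ fun k => measurable_pi_apply _
  have hmapJ : ∀ j, P.map (extractE ∘ Yb j) = μ0 := by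
    intro j
    have h1 : (extractE ∘ Yb j) =ᵐ[P] (fun ω => φ0 (f j ω)) := by
      filter_upwards [hlink j] with ω h
      show extractE (Yb j ω) = φ0 (f j ω)
      funext k
      rw [hextdef]
      dsimp only
      rw [← h, hφgdef, hφ0def]
      dsimp only
      have hpt : pe (2 * k) = ⟨e₀ k, he₀mem k⟩ := Subtype.ext (heven k)
      rw [hpt]
    calc P.map (extractE ∘ Yb j) = P.map (fun ω => φ0 (f j ω)) :=
        Measure.map_congr h1
    _ = P.map (fun ω => φ0 (f 0 ω)) := ((hident j).comp hφ0m).map_eq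
    _ = μ0 := by rw [hμ0def]
  have hDmeasSet : MeasurableSet Dset := hDc.measurableSet
  -- single level a.e. equality of regularizations
  have hsingle : ∀ (j : ℕ) (S : Finset ℕ), j ∉ S → ∀ (Z : Ω → ℝ),
      Measurable[mS S] Z → (∀ ω, Z ω ∈ Set.Icc a b) →
      (fun ω => upF a b e (Yb j ω) (Z ω)) =ᵐ[P] fun ω => dnF a b e (Yb j ω) (Z ω) := by
    intro j S hjS Z hZmS hZr
    have hZm : Measurable Z := hZmS.mono (hmS_le S) le_rfl
    have hZind : IndepFun Z (Yb j) P := hIndepFun2 j S hjS Z hZmS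
    set E : Set (ℝ × (ℕ → ℝ)) :=
      (Prod.fst ⁻¹' (Set.Icc a b \ Dset)) ∩
        {p : ℝ × (ℕ → ℝ) | dnF a b e p.2 p.1 < upF a b e p.2 p.1} with hEdef
    have hupm2 : Measurable fun p : ℝ × (ℕ → ℝ) => upF a b e p.2 p.1 :=
      measurable_upF_comp hab measurable_snd measurable_fst
    have hdnm2 : Measurable fun p : ℝ × (ℕ → ℝ) => dnF a b e p.2 p.1 :=
      measurable_dnF_comp hab measurable_snd measurable_fst
    have hEm : MeasurableSet E :=
      ((measurableSet_Icc.diff hDmeasSet).preimage measurable_fst).inter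
        (measurableSet_lt hdnm2 hupm2)
    have hpairm : Measurable fun ω => (Z ω, Yb j ω) := hZm.prodMk (hYbm j)
    haveI : IsProbabilityMeasure (P.map Z) := Measure.isProbabilityMeasure_map hZm.aemeasurable
    haveI : IsProbabilityMeasure (P.map (Yb j)) :=
      Measure.isProbabilityMeasure_map (hYbm j).aemeasurable
    have hmap : P.map (fun ω => (Z ω, Yb j ω)) = (P.map Z).prod (P.map (Yb j)) :=
      (indepFun_iff_map_prod_eq_prod_map_map hZm.aemeasurable (hYbm j).aemeasurable).1 hZind
    have hnullE : P ((fun ω => (Z ω, Yb j ω)) ⁻¹' E) = 0 := by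
      rw [← Measure.map_apply hpairm hEm, hmap, Measure.prod_apply hEm]
      have hsec : ∀ z : ℝ, (P.map (Yb j)) (Prod.mk z ⁻¹' E) = 0 := by
        intro z
        by_cases hz : z ∈ Set.Icc a b \ Dset
        · have hsec1 : (Prod.mk z ⁻¹' E) = {y | dnF a b e y z < upF a b e y z} := by
            ext y
            simp only [hEdef, Set.mem_preimage, Set.mem_inter_iff, Set.mem_setOf_eq]
            exact and_iff_right hz
          rw [hsec1]
          have hsub2 : {y : ℕ → ℝ | dnF a b e y z < upF a b e y z}
              ⊆ extractE ⁻¹' {y | dnF a b e₀ y z < upF a b e₀ y z} := by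
            intro y hy
            have hy' : dnF a b e y z < upF a b e y z := hy
            have h1 : upF a b e y z ≤ upF a b e₀ (fun k => y (2 * k)) z :=
              upF_le_subgrid e₀ (fun k => 2 * k) heven hab
            have h2 : dnF a b e₀ (fun k => y (2 * k)) z ≤ dnF a b e y z :=
              subgrid_le_dnF e₀ (fun k => 2 * k) heven hab
            exact lt_of_le_of_lt h2 (lt_of_lt_of_le hy' h1)
          have hms0 : MeasurableSet {y : ℕ → ℝ | dnF a b e₀ y z < upF a b e₀ y z} :=
            measurableSet_lt (measurable_dnF_comp hab measurable_id measurable_const)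
              (measurable_upF_comp hab measurable_id measurable_const)
          have hle := measure_mono (μ := P.map (Yb j)) hsub2
          have heq2 : (P.map (Yb j)) (extractE ⁻¹' {y | dnF a b e₀ y z < upF a b e₀ y z})
              = μ0 {y | dnF a b e₀ y z < upF a b e₀ y z} := by
            rw [← Measure.map_apply hextm hms0, Measure.map_map hextm (hYbm j), hmapJ j]
          have hz0 : μ0 {y | dnF a b e₀ y z < upF a b e₀ y z} = 0 := by
            by_contra hcon
            have hzJ : z ∈ J := ⟨hz.1, pos_iff_ne_zero.2 hcon⟩
            exact hz.2 (Or.inr (Set.mem_insert_of_mem a hzJ))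
          exact le_zero_iff.1 (hle.trans_eq (heq2.trans hz0))
        · have hsec2 : (Prod.mk z ⁻¹' E) = ∅ := by
            ext y
            simp only [hEdef, Set.mem_preimage, Set.mem_inter_iff, Set.mem_setOf_eq,
              Set.mem_empty_iff_false, iff_false, not_and]
            exact fun h => absurd h hz
          rw [hsec2, measure_empty]
      simp only [hsec]
      exact lintegral_zero
    have haeE : ∀ᵐ ω ∂P, (Z ω, Yb j ω) ∉ E := by
      rw [ae_iff]
      have hseteq : {ω | ¬(Z ω, Yb j ω) ∉ E} = (fun ω => (Z ω, Yb j ω)) ⁻¹' E := by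
        ext ω
        simp [Set.mem_preimage]
      rw [hseteq]
      exact hnullE
    filter_upwards [hgmono_ae j, haeE] with ω hgm hE
    by_cases hzD : Z ω ∈ Dset
    · obtain ⟨n, hn⟩ := hDrange (Z ω) hzD
      rw [upF_grid_eq hab hgm hn, dnF_grid_eq hab hgm hn]
    · have hz2 : ¬ dnF a b e (Yb j ω) (Z ω) < upF a b e (Yb j ω) (Z ω) := fun hlt =>
        hE ⟨⟨hZr ω, hzD⟩, hlt⟩
      exact le_antisymm (not_lt.1 hz2) (dnF_le_upF hab hgm)
  -- chain-level a.e. equality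
  have hchain : ∀ (N n : ℕ), n ≤ N → ∀ (Z : Ω → ℝ),
      Measurable[mS (Finset.Icc (n + 1) N)] Z → (∀ ω, Z ω ∈ Set.Icc a b) →
      (fun ω => upC a b e (fun j => Yb j ω) n (Z ω)) =ᵐ[P]
        fun ω => dnC a b e (fun j => Yb j ω) n (Z ω) := by
    intro N n
    induction n with
    | zero =>
        intro _ Z hZ hZr
        exact hsingle 0 (Finset.Icc 1 N) (by simp) Z hZ hZr
    | succ n ih =>
        intro hn Z hZ hZr
        have hupmeas : Measurable[mS (Finset.Icc (n + 1) N)]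
            (fun ω => upF a b e (Yb (n + 1) ω) (Z ω)) := by
          refine measurable_upF_comp hab (hcoord _ (n + 1) ?_) ?_
          · rw [Finset.mem_Icc]
            omega
          · exact hZ.mono (hmSmono _ _ (Finset.Icc_subset_Icc (by omega) le_rfl)) le_rfl
        have h1 := ih (by omega) (fun ω => upF a b e (Yb (n + 1) ω) (Z ω)) hupmeas
          (fun ω => ⟨le_upF hab, upF_le_b hab⟩)
        have h2 := hsingle (n + 1) (Finset.Icc (n + 2) N)
          (by rw [Finset.mem_Icc]; omega) Z hZ hZr
        filter_upwards [h1, h2] with ω e1 e2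
        show upC a b e (fun j => Yb j ω) (n + 1) (Z ω)
          = dnC a b e (fun j => Yb j ω) (n + 1) (Z ω)
        calc upC a b e (fun j => Yb j ω) (n + 1) (Z ω)
            = upC a b e (fun j => Yb j ω) n (upF a b e (Yb (n + 1) ω) (Z ω)) := rfl
        _ = dnC a b e (fun j => Yb j ω) n (upF a b e (Yb (n + 1) ω) (Z ω)) := e1
        _ = dnC a b e (fun j => Yb j ω) n (dnF a b e (Yb (n + 1) ω) (Z ω)) := by rw [e2]
        _ = dnC a b e (fun j => Yb j ω) (n + 1) (Z ω) := rfl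
  have hchainA : ∀ n, (fun ω => upC a b e (fun j => Yb j ω) n a) =ᵐ[P]
      fun ω => dnC a b e (fun j => Yb j ω) n a :=
    fun n => hchain n n le_rfl (fun _ => a) measurable_const (fun _ => ⟨le_rfl, hab⟩)
  -- combine all a.e. facts
  have hmono_all : ∀ᵐ ω ∂P, ∀ i, Monotone (f i ω) := ae_all_iff.2 hmono
  have hlink_all : ∀ᵐ ω ∂P, ∀ i, φg (f i ω) = Yb i ω := ae_all_iff.2 hlink
  have hchain_all : ∀ᵐ ω ∂P, ∀ n, upC a b e (fun j => Yb j ω) n a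
      = dnC a b e (fun j => Yb j ω) n a := ae_all_iff.2 hchainA
  have hstrat_all : ∀ᵐ ω ∂P, ∀ ε : ℚ, ω ∉ ⋃ M : ℕ, ⋂ k : ℕ, (Bad ε (M + k))ᶜ := by
    rw [ae_all_iff]
    intro ε
    rw [ae_iff]
    have hseteq : {ω | ¬ω ∉ ⋃ M : ℕ, ⋂ k : ℕ, (Bad ε (M + k))ᶜ}
        = ⋃ M : ℕ, ⋂ k : ℕ, (Bad ε (M + k))ᶜ := by
      ext ω
      simp [not_not]
    rw [hseteq]
    exact measure_iUnion_null fun M => hBadNull ε M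
  filter_upwards [hmono_all, hlink_all, hchain_all, hstrat_all] with ω hmo hlk hce hst
  -- pointwise argument
  have hy : ∀ j m, Yb j ω m = (f j ω (pe m) : ℝ) := fun j m => (congrFun (hlk j) m).symm
  have hgm : ∀ j, gridMono a b e (Yb j ω) := by
    intro j m n hmn
    rw [hy j m, hy j n, cl_eq (f j ω (pe m)).2.1 (f j ω (pe m)).2.2,
      cl_eq (f j ω (pe n)).2.1 (f j ω (pe n)).2.2]
    exact Subtype.coe_le_coe.2
      (hmo j (Subtype.coe_le_coe.1 (show ((pe m : ℝ)) ≤ ((pe n : ℝ)) from hmn)))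
  have hABn : ∀ n, An n ω ≤ Bn n ω := fun n => upC_mono hab n hab
  have hTBn : ∀ n, Tn n ω ≤ Bn n ω := fun n => upC_mono hab n htb
  have hAmono : Monotone fun n => An n ω := by
    refine monotone_nat_of_le_succ fun n => ?_
    show upC a b e (fun j => Yb j ω) n a ≤ upC a b e (fun j => Yb j ω) (n + 1) a
    calc upC a b e (fun j => Yb j ω) n a
        ≤ upC a b e (fun j => Yb j ω) n (upF a b e (Yb (n + 1) ω) a) :=
          upC_mono hab n (le_upF hab)
    _ = upC a b e (fun j => Yb j ω) (n + 1) a := rfl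
  have hBanti : Antitone fun n => Bn n ω := by
    refine antitone_nat_of_succ_le fun n => ?_
    show upC a b e (fun j => Yb j ω) (n + 1) b ≤ upC a b e (fun j => Yb j ω) n b
    calc upC a b e (fun j => Yb j ω) (n + 1) b
        = upC a b e (fun j => Yb j ω) n (upF a b e (Yb (n + 1) ω) b) := rfl
    _ ≤ upC a b e (fun j => Yb j ω) n b := upC_mono hab n (upF_le_b hab)
  have hAB2 : ∀ m n, An m ω ≤ Bn n ω := by
    intro m n
    rcases le_total m n with h | h
    · exact (hAmono h).trans (hABn n)
    · exact (hABn m).trans (hBanti h)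
  have hUimp : ∀ m, ω ∈ Uev (m + 1) → Tn m ω ≤ An (m + 1) ω := by
    intro m hU
    have h1 : (t : ℝ) ≤ upF a b e (Yb (m + 1) ω) a := by
      refine le_trans (show t ≤ cl a b (Yb (m + 1) ω na) from hU) ?_
      exact cl_le_upF hab (hgm (m + 1)) hna.le
    calc Tn m ω = upC a b e (fun j => Yb j ω) m t := rfl
    _ ≤ upC a b e (fun j => Yb j ω) m (upF a b e (Yb (m + 1) ω) a) := upC_mono hab m h1
    _ = An (m + 1) ω := rfl
  have hLimp : ∀ m, ω ∈ Lev (m + 1) → Bn (m + 1) ω ≤ Tn m ω := by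
    intro m hL
    have h1 : upF a b e (Yb (m + 1) ω) b ≤ t :=
      le_trans (upF_le_cl hab hnb.ge) (show cl a b (Yb (m + 1) ω nb) ≤ t from hL)
    calc Bn (m + 1) ω = upC a b e (fun j => Yb j ω) m (upF a b e (Yb (m + 1) ω) b) := rfl
    _ ≤ upC a b e (fun j => Yb j ω) m t := upC_mono hab m h1
    _ = Tn m ω := rfl
  set Dg : ℝ := ⨅ n, (Bn n ω - An n ω) with hDgdef
  have hDbddBelow : BddBelow (Set.range fun n => Bn n ω - An n ω) := by
    refine ⟨0, ?_⟩
    rintro _ ⟨n, rfl⟩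
    exact sub_nonneg.2 (hABn n)
  have hDg_nonneg : 0 ≤ Dg := le_ciInf fun n => sub_nonneg.2 (hABn n)
  have hDg0 : Dg = 0 := by
    by_contra hne
    have hpos2 : 0 < Dg := lt_of_le_of_ne hDg_nonneg (Ne.symm hne)
    obtain ⟨ε, hε1, hε2⟩ := exists_rat_btwn (half_lt_self hpos2)
    have hεpos : (0 : ℝ) < ε := lt_trans (half_pos hpos2) hε1
    have hDlt : Dg < 2 * (ε : ℝ) := by linarith
    have hεle : (ε : ℝ) ≤ Dg := hε2.le
    obtain ⟨M, hM⟩ := exists_lt_of_ciInf_lt hDlt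
    refine hst ε (Set.mem_iUnion.2 ⟨M, Set.mem_iInter.2 fun k => ?_⟩)
    intro hbad
    rcases hbad with ⟨hH, hU⟩ | ⟨hH, hL⟩
    · have h1 : Tn (M + k) ω ≤ An (M + k + 1) ω := hUimp (M + k) hU
      have h2 : Dg ≤ Bn (M + k + 1) ω - An (M + k + 1) ω := ciInf_le hDbddBelow (M + k + 1)
      have h3 : Bn (M + k + 1) ω ≤ Bn (M + k) ω := hBanti (Nat.le_succ _)
      have hH' : Bn (M + k) ω - Tn (M + k) ω < (ε : ℝ) := hH
      linarith
    · have h1 : Bn (M + k + 1) ω ≤ Tn (M + k) ω := hLimp (M + k) hL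
      have h2 : Dg ≤ Bn (M + k + 1) ω - An (M + k + 1) ω := ciInf_le hDbddBelow (M + k + 1)
      have h4 : An (M + k) ω ≤ An (M + k + 1) ω := hAmono (Nat.le_succ _)
      have h5 : Bn (M + k) ω ≤ Bn M ω := hBanti (Nat.le_add_right M k)
      have h6 : An M ω ≤ An (M + k) ω := hAmono (Nat.le_add_right M k)
      have hH' : (ε : ℝ) ≤ Bn (M + k) ω - Tn (M + k) ω := hH
      linarith
  have hAbdd : BddAbove (Set.range fun n => An n ω) := by
    refine ⟨b, ?_⟩
    rintro _ ⟨n, rfl⟩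
    exact upC_le hab n
  set LA : ℝ := ⨆ n, An n ω with hLAdef
  have hALA : ∀ n, An n ω ≤ LA := fun n => le_ciSup hAbdd n
  have hLAB : ∀ n, LA ≤ Bn n ω := fun n => ciSup_le fun m => hAB2 m n
  have hLAmem : LA ∈ Set.Icc a b :=
    ⟨le_trans (le_upC hab 0) (hALA 0), ciSup_le fun n => upC_le hab n⟩
  have hDtend : Tendsto (fun n => Bn n ω - An n ω) atTop (nhds 0) := by
    rw [← hDg0, hDgdef]
    exact tendsto_atTop_ciInf (fun i j hij => sub_le_sub (hBanti hij) (hAmono hij)) hDbddBelow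
  refine ⟨⟨LA, hLAmem⟩, ?_⟩
  have hbound : ∀ (n : ℕ) (x : Set.Icc a b),
      |((compIter (fun i => f i ω) n x : Set.Icc a b) : ℝ) - LA| ≤ Bn n ω - An n ω := by
    intro n x
    have hup : ((compIter (fun i => f i ω) n x : Set.Icc a b) : ℝ) ≤ Bn n ω :=
      compIter_le_upC hpe hmo hy n x b x.2.2
    have hdn : An n ω ≤ ((compIter (fun i => f i ω) n x : Set.Icc a b) : ℝ) := by
      calc An n ω = dnC a b e (fun j => Yb j ω) n a := hce n
      _ ≤ _ := dnC_le_compIter hpe hmo hy n x a x.2.1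
    rw [abs_le]
    constructor
    · have := hLAB n
      linarith
    · have := hALA n
      linarith
  have hsup_le : ∀ n, (⨆ x : Set.Icc a b, |(compIter (fun i => f i ω) n x).1 - LA|)
      ≤ Bn n ω - An n ω := fun n => ciSup_le fun x => hbound n x
  have hsup_nonneg : ∀ n, 0 ≤ ⨆ x : Set.Icc a b, |(compIter (fun i => f i ω) n x).1 - LA| :=
    fun n => Real.iSup_nonneg fun x => abs_nonneg _
  exact squeeze_zero hsup_nonneg hsup_le hDtend
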